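/- arXiv:2406.01510 — 2 statements merged into one kernel-verified Lean document; each statement's English description precedes it below -/
import Mathlib

section
/- A polynomial f ∈ ℤ[x_1,...,x_n] is quasisymmetric if and only if T_1(f) = T_2(f) = ... = T_{n-1}(f) = 0, where T_i(f) = (f(x_1,...,x_{i-1},x_i,0,x_{i+1},...,x_{n-1}) − f(x_1,...,x_{i-1},0,x_i,x_{i+1},...,x_{n-1}))/x_i. -/
open MvPolynomial

/-- The Bergeron–Sottile map `R i` (1-based `i`): set the variable `x_i` to zero
and shift every later variable down by one.  Variables are 0-indexed: `X j`
represents `x_{j+1}`. -/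
noncomputable def R (i : ℕ) : MvPolynomial ℕ ℤ →ₐ[ℤ] MvPolynomial ℕ ℤ :=
  aeval (fun j => if j + 1 < i then X j else if j + 1 = i then 0 else X (j - 1))

/-- The trimming operator `T i = (R (i+1) f - R i f) / x_i` (1-based `i`);
the difference `R (i+1) f - R i f` is always divisible by `x_i = X (i-1)`,
so the exact quotient is computed by `divMonomial`. -/
noncomputable def T (i : ℕ) (f : MvPolynomial ℕ ℤ) : MvPolynomial ℕ ℤ :=
  (R (i + 1) f - R i f).divMonomial (Finsupp.single (i - 1) 1)

/-- `f` only involves the variables `x_1, …, x_n`. -/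
def InVars (n : ℕ) (f : MvPolynomial ℕ ℤ) : Prop :=
  ∀ d ∈ f.support, ∀ j, n ≤ j → d j = 0

/-- `f` is a quasisymmetric polynomial in the variables `x_1, …, x_n`. -/
def IsQSym (n : ℕ) (f : MvPolynomial ℕ ℤ) : Prop :=
  ∀ (k : ℕ) (a : Fin k → ℕ), (∀ l, 1 ≤ a l) →
    ∀ (i j : Fin k → ℕ), StrictMono i → StrictMono j →
      (∀ l, i l < n) → (∀ l, j l < n) →
      coeff (∑ l, Finsupp.single (i l) (a l)) f =
        coeff (∑ l, Finsupp.single (j l) (a l)) f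

/-- skip embedding -/
def skE (m : ℕ) : ℕ ↪ ℕ :=
  ⟨fun j => if j < m then j else j + 1, by
    intro a b h
    dsimp only at h
    split_ifs at h <;> omega⟩

lemma skE_apply (m j : ℕ) : skE m j = if j < m then j else j + 1 := rfl

lemma embDomain_skE_apply (m : ℕ) (d : ℕ →₀ ℕ) (j : ℕ) :
    (Finsupp.embDomain (skE m) d) j = if j < m then d j else if j = m then 0 else d (j - 1) := by
  rcases Nat.lt_trichotomy j m with h | h | h
  · have h1 : skE m j = j := by simp [skE_apply, h]
    rw [if_pos h]
    calc (Finsupp.embDomain (skE m) d) j = (Finsupp.embDomain (skE m) d) (skE m j) := by rw [h1]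
      _ = d j := Finsupp.embDomain_apply_self _ _ _
  · subst h
    rw [if_neg (lt_irrefl _), if_pos rfl]
    apply Finsupp.embDomain_notin_range
    rintro ⟨x, hx⟩
    simp only [skE_apply] at hx
    split_ifs at hx <;> omega
  · have h1 : skE m (j - 1) = j := by
      simp only [skE_apply]
      rw [if_neg (by omega)]
      omega
    rw [if_neg (by omega), if_neg (by omega)]
    calc (Finsupp.embDomain (skE m) d) j = (Finsupp.embDomain (skE m) d) (skE m (j-1)) := by rw [h1]
      _ = d (j-1) := Finsupp.embDomain_apply_self _ _ _

lemma coeff_R (m : ℕ) (f : MvPolynomial ℕ ℤ) (d : ℕ →₀ ℕ) :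
    coeff d (R (m + 1) f) = coeff (Finsupp.embDomain (skE m) d) f := by
  induction f using MvPolynomial.induction_on' with
  | add p q hp hq => simp only [map_add, coeff_add, hp, hq]
  | monomial e c =>
    by_cases hem : e m = 0
    · have hDe : Finsupp.embDomain (skE m) (Finsupp.comapDomain (⇑(skE m)) e ((skE m).injective.injOn)) = e := by
        ext j
        rw [embDomain_skE_apply]
        rcases Nat.lt_trichotomy j m with h | h | h
        · rw [if_pos h, Finsupp.comapDomain_apply]
          congr 1
          simp [skE_apply, h]
        · rw [if_neg (by omega), if_pos h, h, hem]
        · rw [if_neg (by omega), if_neg (by omega), Finsupp.comapDomain_apply]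
          congr 1
          simp only [skE_apply]
          rw [if_neg (by omega)]
          omega
      set D := Finsupp.comapDomain (⇑(skE m)) e ((skE m).injective.injOn) with hDdef
      rw [← hDe]
      have hR : R (m+1) (monomial (Finsupp.embDomain (skE m) D) c) = monomial D c := by
        simp only [_root_.R, MvPolynomial.aeval_monomial, Finsupp.prod_embDomain]
        have : (D.prod fun a b =>
            (if (skE m a) + 1 < m + 1 then (X (skE m a) : MvPolynomial ℕ ℤ)
              else if (skE m a) + 1 = m + 1 then 0 else X ((skE m a) - 1)) ^ b)
            = D.prod fun a b => (X a : MvPolynomial ℕ ℤ) ^ b := by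
          apply Finsupp.prod_congr
          intro a _
          congr 1
          simp only [skE_apply]
          by_cases h : a < m
          · simp only [if_pos h, if_pos (show a + 1 < m + 1 by omega)]
          · simp only [if_neg h, if_neg (show ¬ a + 1 + 1 < m + 1 by omega), if_neg (show ¬ a + 1 + 1 = m + 1 by omega)]
            simp
        rw [this, MvPolynomial.algebraMap_eq, ← MvPolynomial.monomial_eq]
      rw [hR, MvPolynomial.coeff_monomial, MvPolynomial.coeff_monomial]
      simp [Finsupp.embDomain_inj]
    · have h0 : R (m+1) (monomial e c) = 0 := by
        simp only [_root_.R, MvPolynomial.aeval_monomial, Finsupp.prod]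
        rw [Finset.prod_eq_zero (Finsupp.mem_support_iff.2 hem), mul_zero]
        rw [if_neg (by omega), if_pos rfl]
        exact zero_pow hem
      rw [h0, MvPolynomial.coeff_zero, MvPolynomial.coeff_monomial, if_neg]
      intro h
      apply hem
      rw [h, embDomain_skE_apply, if_neg (lt_irrefl _), if_pos rfl]
lemma swap_embDomain (m : ℕ) (D : ℕ →₀ ℕ) :
    Finsupp.equivMapDomain (Equiv.swap m (m+1)) (Finsupp.embDomain (skE (m+1)) D) =
      Finsupp.embDomain (skE m) D := by
  ext j
  rw [Finsupp.equivMapDomain_apply, Equiv.symm_swap]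
  rcases Nat.lt_trichotomy j m with h | h | h
  · rw [Equiv.swap_apply_of_ne_of_ne (by omega) (by omega)]
    rw [embDomain_skE_apply, embDomain_skE_apply, if_pos (by omega), if_pos h]
  · subst h
    rw [Equiv.swap_apply_left, embDomain_skE_apply, embDomain_skE_apply]
    simp
  · rcases Nat.eq_or_lt_of_le h with h1 | h1
    · rw [← h1, Equiv.swap_apply_right, embDomain_skE_apply, embDomain_skE_apply]
      rw [if_pos (by omega), if_neg (by omega), if_neg (by omega)]
      simp
    · rw [Equiv.swap_apply_of_ne_of_ne (by omega) (by omega)]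
      rw [embDomain_skE_apply, embDomain_skE_apply]
      rw [if_neg (by omega), if_neg (by omega), if_neg (by omega), if_neg (by omega)]

lemma sum_single_apply_eq_zero {k : ℕ} (i a : Fin k → ℕ) (p : ℕ) (h : ∀ l, i l ≠ p) :
    (∑ l, Finsupp.single (i l) (a l)) p = 0 := by
  rw [Finsupp.finset_sum_apply]
  exact Finset.sum_eq_zero fun l _ => by rw [Finsupp.single_apply, if_neg (h l)]

lemma equivMapDomain_sum_single (σ : ℕ ≃ ℕ) {k : ℕ} (i a : Fin k → ℕ) :
    Finsupp.equivMapDomain σ (∑ l, Finsupp.single (i l) (a l)) =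
      ∑ l, Finsupp.single (σ (i l)) (a l) := by
  rw [Finsupp.equivMapDomain_eq_mapDomain, ← Finsupp.mapDomain.addMonoidHom_apply, map_sum]
  simp [Finsupp.mapDomain.addMonoidHom_apply, Finsupp.mapDomain_single]

lemma enum_finsupp (e : ℕ →₀ ℕ) : ∃ (k : ℕ) (iF a : Fin k → ℕ), StrictMono iF ∧
    (∀ l, iF l ∈ e.support) ∧ (∑ l, Finsupp.single (iF l) (a l)) = e ∧
    (∀ l, a l = e (iF l)) := by
  refine ⟨e.support.card, fun l => ((e.support.orderIsoOfFin rfl) l : ℕ),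
    fun l => e ((e.support.orderIsoOfFin rfl) l : ℕ), ?_, fun l => ((e.support.orderIsoOfFin rfl) l).2, ?_, fun l => rfl⟩
  · intro x y hxy
    exact Subtype.coe_lt_coe.2 ((e.support.orderIsoOfFin rfl).lt_iff_lt.2 hxy)
  · have h1 : ∀ (g : ℕ → ℕ →₀ ℕ),
        ∑ l : Fin e.support.card, g ((e.support.orderIsoOfFin rfl) l : ℕ) = ∑ p ∈ e.support, g p := by
      intro g
      rw [← Finset.sum_coe_sort e.support g]
      exact Fintype.sum_equiv (e.support.orderIsoOfFin rfl).toEquiv _ _ (fun l => rfl)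
    rw [h1 (fun p => Finsupp.single p (e p))]
    exact Finsupp.sum_single e

lemma strictMono_le_apply {k : ℕ} {i : Fin k → ℕ} (h : StrictMono i) (l : Fin k) : (l : ℕ) ≤ i l := by
  suffices H : ∀ v (hv : v < k), v ≤ i ⟨v, hv⟩ by simpa using H l.1 l.2
  intro v
  induction v with
  | zero => exact fun _ => Nat.zero_le _
  | succ v ih =>
    intro hv
    have h1 : v < k := by omega
    have h2 := ih h1
    have h3 : i ⟨v, h1⟩ < i ⟨v+1, hv⟩ := h (by simp [Fin.lt_def])
    show v + 1 ≤ i ⟨v+1, hv⟩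
    omega

lemma coeff_highvar (n : ℕ) (f : MvPolynomial ℕ ℤ)
    (hf : ∀ d ∈ f.support, ∀ j, n ≤ j → d j = 0) (e : ℕ →₀ ℕ) (j : ℕ)
    (hj : n ≤ j) (hej : e j ≠ 0) : coeff e f = 0 := by
  by_contra hc
  exact hej (hf e (MvPolynomial.mem_support_iff.2 hc) j hj)
lemma reduce (n : ℕ) (f : MvPolynomial ℕ ℤ)
    (hP : ∀ m, m + 2 ≤ n → ∀ e : ℕ →₀ ℕ, e (m+1) = 0 →
      coeff e f = coeff (Finsupp.equivMapDomain (Equiv.swap m (m+1)) e) f)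
    {k : ℕ} (a : Fin k → ℕ) :
    ∀ (N : ℕ) (i : Fin k → ℕ), StrictMono i → (∀ l, i l < n) → (∑ l, i l) = N →
      coeff (∑ l, Finsupp.single (i l) (a l)) f =
        coeff (∑ l : Fin k, Finsupp.single ((l : ℕ)) (a l)) f := by
  intro N
  induction N using Nat.strong_induction_on with
  | _ N IH =>
  intro i hi hin hsum
  by_cases hid : ∀ l, i l = (l : ℕ)
  · apply congrArg (fun e => coeff e f) ∘ Finset.sum_congr rfl
    exact fun l _ => by rw [hid l]
  · push_neg at hid
    obtain ⟨l₁, hl₁⟩ := hid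
    set s : Finset (Fin k) := Finset.univ.filter (fun l => i l ≠ (l : ℕ)) with hsdef
    have hs : s.Nonempty := ⟨l₁, Finset.mem_filter.2 ⟨Finset.mem_univ _, hl₁⟩⟩
    set l₀ := s.min' hs with hl₀def
    have hl₀ : i l₀ ≠ (l₀ : ℕ) := (Finset.mem_filter.1 (s.min'_mem hs)).2
    have hmin : ∀ l, l < l₀ → i l = (l : ℕ) := by
      intro l hl
      by_contra hc
      exact absurd (s.min'_le l (Finset.mem_filter.2 ⟨Finset.mem_univ _, hc⟩)) (not_le.2 hl)
    have hge : (l₀ : ℕ) < i l₀ := lt_of_le_of_ne (strictMono_le_apply hi l₀) (Ne.symm hl₀)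
    set m := i l₀ - 1 with hmdef
    have hm1 : i l₀ = m + 1 := by omega
    have hnem : ∀ l, i l ≠ m := by
      intro l
      rcases lt_trichotomy l l₀ with h | h | h
      · have hv : (l : ℕ) < (l₀ : ℕ) := Fin.lt_def.mp h
        rw [hmin l h]; omega
      · rw [h]; omega
      · have := hi h; omega
    set i' : Fin k → ℕ := fun l => if l = l₀ then m else i l with hi'def
    have hi'₀ : i' l₀ = m := if_pos rfl
    have hi'ne : ∀ l, l ≠ l₀ → i' l = i l := fun l h => if_neg h
    have hmono' : StrictMono i' := by
      intro x y hxy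
      rcases eq_or_ne x l₀ with rfl | hx
      · rw [hi'₀, hi'ne y (by intro h; rw [h] at hxy; exact absurd hxy (lt_irrefl _))]
        have := hi hxy
        omega
      · rcases eq_or_ne y l₀ with rfl | hy
        · rw [hi'ne x hx, hi'₀, hmin x hxy]
          have hv := Fin.lt_def.mp hxy
          omega
        · rw [hi'ne x hx, hi'ne y hy]; exact hi hxy
    have hin' : ∀ l, i' l < n := by
      intro l
      rcases eq_or_ne l l₀ with rfl | h
      · rw [hi'₀]; have := hin l₀; omega
      · rw [hi'ne l h]; exact hin l
    have hsum' : (∑ l, i' l) < N := by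
      rw [← hsum]
      apply Finset.sum_lt_sum
      · intro l _
        rcases eq_or_ne l l₀ with rfl | h
        · rw [hi'₀]; omega
        · rw [hi'ne l h]
      · exact ⟨l₀, Finset.mem_univ _, by rw [hi'₀]; omega⟩
    have hswap : ∀ l, Equiv.swap m (m+1) (i' l) = i l := by
      intro l
      rcases eq_or_ne l l₀ with rfl | h
      · rw [hi'₀, Equiv.swap_apply_left, hm1]
      · rw [hi'ne l h]
        exact Equiv.swap_apply_of_ne_of_ne (hnem l)
          (fun hc => h (hi.injective (by rw [hc, hm1])))
    have hkey := hP m (by have := hin l₀; omega) (∑ l, Finsupp.single (i' l) (a l))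
      (sum_single_apply_eq_zero _ _ _ (fun l => by
        rcases eq_or_ne l l₀ with rfl | h
        · rw [hi'₀]; omega
        · rw [hi'ne l h]
          intro hc
          exact h (hi.injective (hc.trans hm1.symm))))
    rw [equivMapDomain_sum_single] at hkey
    have hkey2 : (∑ l, Finsupp.single ((Equiv.swap m (m+1)) (i' l)) (a l)) =
        ∑ l, Finsupp.single (i l) (a l) :=
      Finset.sum_congr rfl (fun l _ => by rw [hswap l])
    rw [hkey2] at hkey
    rw [← hkey]
    exact IH _ hsum' i' hmono' hin' rfl

/-- `f ∈ ℤ[x_1,…,x_n]` is quasisymmetric iff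
`T_1 f = ⋯ = T_{n-1} f = 0`. -/
theorem qsym_iff_T_eq_zero (n : ℕ) (f : MvPolynomial ℕ ℤ) (hf : InVars n f) :
    IsQSym n f ↔ ∀ i, 1 ≤ i → i + 1 ≤ n → T i f = 0 := by
  constructor
  · intro hq i hi1 hin
    obtain ⟨m, rfl⟩ : ∃ m, i = m + 1 := ⟨i - 1, by omega⟩
    ext d
    rw [MvPolynomial.coeff_zero]
    simp only [T, Nat.add_sub_cancel]
    rw [MvPolynomial.coeff_divMonomial, MvPolynomial.coeff_sub,
      coeff_R (m+1) f, coeff_R m f, sub_eq_zero]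
    set D := Finsupp.single m 1 + d with hDdef
    set e1 := Finsupp.embDomain (skE (m+1)) D with he1def
    have he2 : Finsupp.embDomain (skE m) D =
        Finsupp.equivMapDomain (Equiv.swap m (m+1)) e1 := (swap_embDomain m D).symm
    rw [he2]
    by_cases hn : ∀ j, n ≤ j → e1 j = 0
    · obtain ⟨k, iF, aF, hmono, hmem, hsum, haF⟩ := enum_finsupp e1
      have hne : ∀ l, 1 ≤ aF l := by
        intro l
        have := Finsupp.mem_support_iff.1 (hmem l)
        rw [haF l]
        omega
      have hm1 : e1 (m+1) = 0 := by
        rw [he1def, embDomain_skE_apply, if_neg (by omega), if_pos rfl]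
      have hiF_ne : ∀ l, iF l ≠ m + 1 := by
        intro l hc
        exact (Finsupp.mem_support_iff.1 (hmem l)) (hc ▸ hm1)
      have hiFn : ∀ l, iF l < n := by
        intro l
        by_contra hc
        exact (Finsupp.mem_support_iff.1 (hmem l)) (hn _ (le_of_not_gt hc))
      have hj_mono : StrictMono (fun l => (Equiv.swap m (m+1)) (iF l)) := by
        intro x y hxy
        have hxny := hmono hxy
        dsimp only
        rcases eq_or_ne (iF x) m with hx | hx
        · rw [hx, Equiv.swap_apply_left,
            Equiv.swap_apply_of_ne_of_ne (by have := hiF_ne y; omega) (hiF_ne y)]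
          have := hiF_ne y
          omega
        · rw [Equiv.swap_apply_of_ne_of_ne hx (hiF_ne x)]
          rcases eq_or_ne (iF y) m with hy | hy
          · rw [hy, Equiv.swap_apply_left]
            omega
          · rw [Equiv.swap_apply_of_ne_of_ne hy (hiF_ne y)]
            exact hxny
      have hjn : ∀ l, (fun l => (Equiv.swap m (m+1)) (iF l)) l < n := by
        intro l
        dsimp only
        rcases eq_or_ne (iF l) m with h | h
        · rw [h, Equiv.swap_apply_left]; omega
        · rw [Equiv.swap_apply_of_ne_of_ne h (hiF_ne l)]; exact hiFn l
      have hmain := hq k aF hne iF (fun l => (Equiv.swap m (m+1)) (iF l))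
        hmono hj_mono hiFn hjn
      rw [← hsum, equivMapDomain_sum_single]
      exact hmain
    · push_neg at hn
      obtain ⟨j, hjn, hj0⟩ := hn
      have hj2 : (Finsupp.equivMapDomain (Equiv.swap m (m+1)) e1) j ≠ 0 := by
        rw [Finsupp.equivMapDomain_apply, Equiv.symm_swap,
          Equiv.swap_apply_of_ne_of_ne (by omega) (by omega)]
        exact hj0
      rw [coeff_highvar n f hf e1 j hjn hj0, coeff_highvar n f hf _ j hjn hj2]
  · intro hT
    have hP : ∀ m, m + 2 ≤ n → ∀ e : ℕ →₀ ℕ, e (m+1) = 0 →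
        coeff e f = coeff (Finsupp.equivMapDomain (Equiv.swap m (m+1)) e) f := by
      intro m hm e he
      by_cases h0 : e m = 0
      · have heq : Finsupp.equivMapDomain (Equiv.swap m (m+1)) e = e := by
          ext j
          rw [Finsupp.equivMapDomain_apply, Equiv.symm_swap]
          rcases eq_or_ne j m with rfl | hjm
          · rw [Equiv.swap_apply_left, he, h0]
          · rcases eq_or_ne j (m+1) with rfl | hjm1
            · rw [Equiv.swap_apply_right, h0, he]
            · rw [Equiv.swap_apply_of_ne_of_ne hjm hjm1]
        rw [heq]
      · have hTm := hT (m+1) (by omega) (by omega)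
        have hcoeff : ∀ d : ℕ →₀ ℕ,
            coeff (Finsupp.single m 1 + d) (R (m+1+1) f) =
              coeff (Finsupp.single m 1 + d) (R (m+1) f) := by
          intro d
          have hz : coeff d (T (m+1) f) = 0 := by rw [hTm, MvPolynomial.coeff_zero]
          simp only [T, Nat.add_sub_cancel] at hz
          rw [MvPolynomial.coeff_divMonomial, MvPolynomial.coeff_sub, sub_eq_zero] at hz
          exact hz
        set D : ℕ →₀ ℕ := Finsupp.comapDomain (⇑(skE (m+1))) e ((skE (m+1)).injective.injOn)
          with hDdef
        have hDm : D m = e m := by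
          rw [hDdef, Finsupp.comapDomain_apply]
          congr 1
          simp [skE_apply]
        have hDe : Finsupp.embDomain (skE (m+1)) D = e := by
          ext j
          rw [embDomain_skE_apply]
          rcases Nat.lt_trichotomy j (m+1) with h | h | h
          · rw [if_pos h, hDdef, Finsupp.comapDomain_apply]
            congr 1
            simp [skE_apply, h]
          · rw [if_neg (by omega), if_pos h, h, he]
          · rw [if_neg (by omega), if_neg (by omega), hDdef, Finsupp.comapDomain_apply]
            congr 1
            simp only [skE_apply]
            rw [if_neg (by omega)]
            omega
        have hD : Finsupp.single m 1 + (D - Finsupp.single m 1) = D := by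
          ext j
          rw [Finsupp.add_apply, Finsupp.tsub_apply]
          rcases eq_or_ne j m with rfl | hj
          · rw [Finsupp.single_apply, if_pos rfl]
            have : D j ≠ 0 := by rw [hDm]; exact h0
            omega
          · rw [Finsupp.single_apply, if_neg (Ne.symm hj)]
            omega
        calc coeff e f
            = coeff (Finsupp.single m 1 + (D - Finsupp.single m 1)) (R (m+1+1) f) := by
              rw [coeff_R (m+1) f, hD, hDe]
          _ = coeff (Finsupp.single m 1 + (D - Finsupp.single m 1)) (R (m+1) f) := hcoeff _
          _ = coeff (Finsupp.equivMapDomain (Equiv.swap m (m+1)) e) f := by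
              rw [coeff_R m f, hD, ← hDe, swap_embDomain]
    intro k a ha i j hi hj hin hjn
    rw [reduce n f hP a _ i hi hin rfl, reduce n f hP a _ j hj hjn rfl]
end

section
/- The intersection over all i ≥ n+1 of the kernels of the trimming operators T_i on the polynomial ring ℤ[x_1,x_2,...] equals ℤ[x_1,...,x_n]. In particular, the intersection of all kernels ker(T_i) for i ≥ 1 equals ℤ. -/
open MvPolynomial

def emb (k : ℕ) : ℕ ↪ ℕ :=
  ⟨fun j => if j < k then j else j + 1, by
    intro a b h
    dsimp at h
    split_ifs at h <;> omega⟩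

noncomputable def ins (k : ℕ) (e : ℕ →₀ ℕ) : ℕ →₀ ℕ := e.embDomain (emb k)

lemma emb_apply (k j : ℕ) : emb k j = if j < k then j else j + 1 := rfl

lemma ins_apply (k : ℕ) (e : ℕ →₀ ℕ) (j : ℕ) :
    ins k e j = if j < k then e j else if j = k then 0 else e (j - 1) := by
  rcases lt_trichotomy j k with h | h | h
  · have h2 := Finsupp.embDomain_apply_self (emb k) e j
    rw [emb_apply, if_pos h] at h2
    rw [ins, h2, if_pos h]
  · subst h
    rw [ins, Finsupp.embDomain_notin_range, if_neg (lt_irrefl j), if_pos rfl]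
    rintro ⟨a, ha⟩
    simp only [emb_apply] at ha
    split_ifs at ha <;> omega
  · have hj : emb k (j - 1) = j := by rw [emb_apply, if_neg (by omega)]; omega
    have h2 := Finsupp.embDomain_apply_self (emb k) e (j - 1)
    rw [hj] at h2
    rw [ins, h2, if_neg (by omega), if_neg (by omega)]

lemma ins_inj (k : ℕ) : Function.Injective (ins k) :=
  fun _ _ h => Finsupp.embDomain_injective _ h

lemma prod_monomial {s : Finset ℕ} (u : ℕ → ℕ →₀ ℕ) :
    (∏ j ∈ s, monomial (u j) (1:ℤ)) = monomial (∑ j ∈ s, u j) 1 := by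
  classical
  induction s using Finset.induction_on with
  | empty => simp
  | insert _ _ h ih => rw [Finset.prod_insert h, Finset.sum_insert h, ih, monomial_mul, mul_one]

lemma coeff_R_s5 (k : ℕ) (e : ℕ →₀ ℕ) (f : MvPolynomial ℕ ℤ) :
    coeff e (R (k + 1) f) = coeff (ins k e) f := by
  induction f using MvPolynomial.induction_on' with
  | add p q hp hq => simp only [map_add, coeff_add, hp, hq]
  | monomial d c =>
    rw [_root_.R, aeval_monomial]
    by_cases hdk : d k = 0
    · have hterm : ∀ j ∈ d.support,
          ((if j + 1 < k + 1 then X j else if j + 1 = k + 1 then 0 else X (j-1)) ^ d j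
            : MvPolynomial ℕ ℤ)
          = monomial (Finsupp.single (if j < k then j else j - 1) (d j)) 1 := by
        intro j hj
        have hjk : j ≠ k := fun h => (Finsupp.mem_support_iff.mp hj) (h ▸ hdk)
        rcases lt_or_gt_of_ne hjk with h | h
        · simp [h, X_pow_eq_monomial, Nat.lt_succ_of_lt]
        · have h1 : ¬ j + 1 < k + 1 := by omega
          have h2 : j + 1 ≠ k + 1 := by omega
          have h3 : ¬ j < k := by omega
          simp [h1, h2, h3, hjk, X_pow_eq_monomial]
      rw [Finsupp.prod, Finset.prod_congr rfl hterm, prod_monomial]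
      set D : ℕ →₀ ℕ := ∑ j ∈ d.support, Finsupp.single (if j < k then j else j - 1) (d j)
        with hD
      have hinsD : ins k D = d := by
        rw [ins, hD]
        have hsum := map_sum (Finsupp.embDomain.addMonoidHom (emb k))
          (fun j => Finsupp.single (if j < k then j else j - 1) (d j)) d.support
        rw [show ⇑(Finsupp.embDomain.addMonoidHom (emb k) : (ℕ →₀ ℕ) →+ ℕ →₀ ℕ)
              = Finsupp.embDomain (emb k) from rfl] at hsum
        rw [hsum]
        have : ∀ j ∈ d.support,
            Finsupp.embDomain (emb k)
              (Finsupp.single (if j < k then j else j - 1) (d j))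
            = Finsupp.single j (d j) := by
          intro j hj
          have hjk : j ≠ k := fun h => (Finsupp.mem_support_iff.mp hj) (h ▸ hdk)
          rw [Finsupp.embDomain_single]
          congr 1
          rw [emb_apply]
          split_ifs <;> omega
        rw [Finset.sum_congr rfl this, ← Finsupp.sum, Finsupp.sum_single]
      have halg : (algebraMap ℤ (MvPolynomial ℕ ℤ)) c = C c := rfl
      have hiff : (d = ins k e) ↔ (D = e) :=
        ⟨fun h => ins_inj k (hinsD.trans h), fun h => (h ▸ hinsD).symm⟩
      rw [halg, C_mul_monomial, mul_one, coeff_monomial, coeff_monomial,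
        if_congr hiff rfl rfl]
    · have hzero : (d.prod fun j a =>
          ((if j + 1 < k + 1 then X j else if j + 1 = k + 1 then 0 else X (j-1)) ^ a
            : MvPolynomial ℕ ℤ)) = 0 := by
        apply Finset.prod_eq_zero (Finsupp.mem_support_iff.mpr hdk)
        simp [zero_pow hdk]
      rw [hzero, mul_zero, coeff_zero, coeff_monomial, if_neg]
      intro h
      apply hdk
      rw [h, ins_apply]
      simp

lemma T_zero_iff (k : ℕ) (f : MvPolynomial ℕ ℤ) :
    T (k + 1) f = 0 ↔
      ∀ e : ℕ →₀ ℕ, 1 ≤ e k → coeff (ins (k + 1) e) f = coeff (ins k e) f := by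
  rw [_root_.T]
  simp only [Nat.add_sub_cancel]
  constructor
  · intro h e he
    have h2 := congrArg (coeff (e - Finsupp.single k 1)) h
    rw [coeff_divMonomial, coeff_zero, coeff_sub] at h2
    have heq : Finsupp.single k 1 + (e - Finsupp.single k 1) = e := by
      ext j
      simp only [Finsupp.add_apply, Finsupp.tsub_apply, Finsupp.single_apply]
      by_cases hj : k = j
      · rw [if_pos hj]
        subst hj
        omega
      · rw [if_neg hj]
        omega
    rw [heq, coeff_R_s5, coeff_R_s5] at h2
    omega
  · intro h
    apply MvPolynomial.ext
    intro d
    rw [coeff_divMonomial, coeff_zero, coeff_sub, coeff_R_s5, coeff_R_s5]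
    have := h (Finsupp.single k 1 + d) (by simp)
    omega

lemma invars_of (n : ℕ) (f : MvPolynomial ℕ ℤ)
    (h : ∀ k, n ≤ k → ∀ e : ℕ →₀ ℕ, 1 ≤ e k →
      coeff (ins (k + 1) e) f = coeff (ins k e) f) : InVars n f := by
  classical
  by_contra hc
  unfold InVars at hc
  push_neg at hc
  set S := f.support.filter (fun d => ∃ j, n ≤ j ∧ d j ≠ 0) with hS
  have hSne : S.Nonempty := by
    obtain ⟨d, hd, j, hj, hdj⟩ := hc
    exact ⟨d, Finset.mem_filter.mpr ⟨hd, j, hj, hdj⟩⟩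
  set w : (ℕ →₀ ℕ) → ℕ := fun d => d.sum fun j a => a * j with hw
  obtain ⟨d, hdS, hmax⟩ := S.exists_max_image w hSne
  obtain ⟨hdsup, j, hj, hdj⟩ := Finset.mem_filter.mp hdS
  have hsne : d.support.Nonempty := ⟨j, Finsupp.mem_support_iff.mpr hdj⟩
  set k := d.support.max' hsne with hk
  have hdk : d k ≠ 0 := Finsupp.mem_support_iff.mp (d.support.max'_mem hsne)
  have hnk : n ≤ k := le_trans hj (d.support.le_max' j (Finsupp.mem_support_iff.mpr hdj))
  have habove : ∀ m, k < m → d m = 0 := by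
    intro m hm
    by_contra hmm
    exact absurd (d.support.le_max' m (Finsupp.mem_support_iff.mpr hmm)) (by omega)
  have h1 : ins (k + 1) d = d := by
    ext j'
    rw [ins_apply]
    split_ifs with hlt heq
    · rfl
    · exact (habove j' (by omega)).symm
    · rw [habove j' (by omega), habove (j' - 1) (by omega)]
  have hco : coeff (ins k d) f = coeff d f := by
    rw [← h (k) hnk d (by omega), h1]
  have h2 : ins k d = d.erase k + Finsupp.single (k + 1) (d k) := by
    ext j'
    rw [ins_apply, Finsupp.add_apply, Finsupp.erase_apply, Finsupp.single_apply]
    rcases lt_trichotomy j' k with hlt | heq | hgt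
    · rw [if_pos hlt, if_neg (by omega), if_neg (by omega)]
      omega
    · subst heq
      simp
    · rw [if_neg (by omega), if_neg (by omega), if_neg (by omega)]
      by_cases hj2 : j' = k + 1
      · subst hj2
        simp [habove (k + 1) (by omega)]
      · rw [if_neg (by omega), habove j' (by omega), habove (j' - 1) (by omega)]
        omega
  have hwadd : ∀ u v : ℕ →₀ ℕ, w (u + v) = w u + w v := by
    intro u v
    exact Finsupp.sum_add_index' (fun j => by simp) (fun j a b => by ring)
  have hwsingle : ∀ j a, w (Finsupp.single j a) = a * j := by
    intro j a
    rw [hw]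
    exact Finsupp.sum_single_index (by simp)
  have hdecomp : d = d.erase k + Finsupp.single k (d k) := (Finsupp.erase_add_single k d).symm
  have hwd : w d = w (d.erase k) + d k * k := by
    conv_lhs => rw [hdecomp]
    rw [hwadd, hwsingle]
  have hwd' : w (ins k d) = w (d.erase k) + d k * (k + 1) := by
    rw [h2, hwadd, hwsingle]
  have hmem : ins k d ∈ S := by
    apply Finset.mem_filter.mpr
    constructor
    · apply MvPolynomial.mem_support_iff.mpr
      rw [hco]
      exact MvPolynomial.mem_support_iff.mp hdsup
    · refine ⟨k + 1, by omega, ?_⟩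
      rw [ins_apply, if_neg (by omega), if_neg (by omega)]
      simpa using hdk
  have hle := hmax (ins k d) hmem
  have hnl : d k * (k + 1) = d k * k + d k := by ring
  omega

lemma Tzero_of (n : ℕ) (f : MvPolynomial ℕ ℤ) (hf : InVars n f) :
    ∀ k, n ≤ k → ∀ e : ℕ →₀ ℕ, 1 ≤ e k →
      coeff (ins (k + 1) e) f = coeff (ins k e) f := by
  intro k hk e he
  have hz : ∀ d : ℕ →₀ ℕ, (∃ j, n ≤ j ∧ d j ≠ 0) → coeff d f = 0 := by
    intro d ⟨j, hj, hdj⟩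
    by_contra hc
    exact hdj (hf d (MvPolynomial.mem_support_iff.mpr hc) j hj)
  have e1 : (ins (k + 1) e) k ≠ 0 := by
    rw [ins_apply, if_pos (by omega)]
    omega
  have e2 : (ins k e) (k + 1) ≠ 0 := by
    rw [ins_apply, if_neg (by omega), if_neg (by omega)]
    simp only [Nat.add_sub_cancel]
    omega
  rw [hz _ ⟨k, hk, e1⟩, hz _ ⟨k + 1, by omega, e2⟩]

lemma part1 (n : ℕ) (f : MvPolynomial ℕ ℤ) :
    (∀ i, n + 1 ≤ i → T i f = 0) ↔ InVars n f := by
  constructor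
  · intro h
    apply invars_of
    intro k hk e he
    exact (T_zero_iff k f).mp (h (k + 1) (by omega)) e he
  · intro hf i hi
    obtain ⟨k, rfl⟩ : ∃ k, i = k + 1 := ⟨i - 1, by omega⟩
    rw [T_zero_iff]
    intro e he
    exact Tzero_of n f hf k (by omega) e he

/-- `⋂_{i ≥ n+1} ker T_i = ℤ[x_1,…,x_n]`, and in particular
`⋂_{i ≥ 1} ker T_i = ℤ`. -/
theorem kernel_of_trimmings (n : ℕ) :
    (∀ f : MvPolynomial ℕ ℤ, (∀ i, n + 1 ≤ i → T i f = 0) ↔ InVars n f) ∧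
      (∀ f : MvPolynomial ℕ ℤ,
        (∀ i, 1 ≤ i → T i f = 0) ↔ ∃ c : ℤ, f = C c) := by
  refine ⟨part1 n, fun f => ?_⟩
  rw [show (∀ i, 1 ≤ i → T i f = 0) ↔ InVars 0 f from part1 0 f]
  constructor
  · intro h
    refine ⟨coeff 0 f, ?_⟩
    apply MvPolynomial.ext
    intro m
    rw [coeff_C]
    by_cases hm : (0 : ℕ →₀ ℕ) = m
    · rw [if_pos hm, hm]
    · rw [if_neg hm]
      by_contra hc
      apply hm
      ext j
      exact (h m (MvPolynomial.mem_support_iff.mpr hc) j (Nat.zero_le j)).symm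
  · rintro ⟨c, rfl⟩ d hd j _
    have h0 : coeff d (C c) ≠ 0 := MvPolynomial.mem_support_iff.mp hd
    rw [coeff_C] at h0
    by_cases hd0 : (0 : ℕ →₀ ℕ) = d
    · rw [← hd0]
      rfl
    · rw [if_neg hd0] at h0
      exact absurd rfl h0
end
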